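/- Let (b_n)_{n≥1} be a sequence of positive reals with b_n ≥ c·min(1, g/(d + 3π n)) for constants c, g, d > 0. Then the series Σ_{n=0}^∞ exp(-Σ_{j=1}^n b_j) converges, provided c·g/(3π) > 1. -/
import Mathlib


open Real Filter

/-- If `b_n ≥ c · min(1, g/(d + 3πn))` with `c g > 3π`, then
`Σ_n exp(-(b_1 + ⋯ + b_n))` converges. -/
theorem summable_exp_neg_partial_sums
    (c g d : ℝ) (b : ℕ → ℝ)
    (hc : 0 < c) (hg : 0 < g) (hd : 0 < d)
    (hcg : 3 * Real.pi < c * g)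
    (hbpos : ∀ n : ℕ, 1 ≤ n → 0 < b n)
    (hb : ∀ n : ℕ, 1 ≤ n → c * min 1 (g / (d + 3 * Real.pi * n)) ≤ b n) :
    Summable (fun n : ℕ => Real.exp (-(∑ j ∈ Finset.Icc 1 n, b j))) := by
  have hpi : (0:ℝ) < 3 * Real.pi := by positivity
  set A : ℝ := d + g with hA
  have hApos : 0 < A := by positivity
  set α : ℝ := c * g / (3 * Real.pi) with hα
  have hα1 : 1 < α := (one_lt_div hpi).mpr hcg
  have hαpos : 0 < α := by linarith
  have hden : ∀ n : ℕ, 0 < A + 3 * Real.pi * n := fun n => by positivity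
  -- lower bound on b n
  have hkey : ∀ n : ℕ, 1 ≤ n → c * g / (A + 3 * Real.pi * n) ≤ b n := by
    intro n hn
    refine le_trans ?_ (hb n hn)
    rw [div_le_iff₀ (hden n)]
    have h1 : g / (A + 3 * Real.pi * n) ≤ min 1 (g / (d + 3 * Real.pi * n)) := by
      refine le_min ?_ ?_
      · rw [div_le_one (hden n)]
        have : (0:ℝ) ≤ 3 * Real.pi * n := by positivity
        simp only [hA]; linarith
      · apply div_le_div_of_nonneg_left hg.le (by positivity)
        have : (0:ℝ) ≤ 3 * Real.pi * n := by positivity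
        simp only [hA]; linarith
    calc c * g = c * (g / (A + 3 * Real.pi * n)) * (A + 3 * Real.pi * n) := by
          field_simp
      _ ≤ c * min 1 (g / (d + 3 * Real.pi * n)) * (A + 3 * Real.pi * n) := by
          apply mul_le_mul_of_nonneg_right _ (hden n).le
          exact mul_le_mul_of_nonneg_left h1 hc.le
  -- partial sums grow logarithmically
  have hsum : ∀ n : ℕ, α * Real.log (A + 3 * Real.pi * (n + 1))
      - α * Real.log (A + 3 * Real.pi) ≤ ∑ j ∈ Finset.Icc 1 n, b j := by
    intro n
    induction n with
    | zero => simp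
    | succ n ih =>
      rw [Finset.sum_Icc_succ_top (by omega)]
      have hx : 0 < A + 3 * Real.pi * (n + 1) := by positivity
      have hy : 0 < A + 3 * Real.pi * (n + 2) := by positivity
      have hlog : Real.log (A + 3 * Real.pi * (n + 2))
          - Real.log (A + 3 * Real.pi * (n + 1))
          ≤ 3 * Real.pi / (A + 3 * Real.pi * (n + 1)) := by
        have := Real.log_le_sub_one_of_pos
          (show 0 < (A + 3 * Real.pi * (n + 2)) / (A + 3 * Real.pi * (n + 1)) by positivity)
        rw [Real.log_div hy.ne' hx.ne'] at this
        have heq : (A + 3 * Real.pi * (n + 2)) / (A + 3 * Real.pi * (n + 1)) - 1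
            = 3 * Real.pi / (A + 3 * Real.pi * (n + 1)) := by
          field_simp; ring
        linarith [heq ▸ this]
      have hstep : α * Real.log (A + 3 * Real.pi * (n + 2))
          - α * Real.log (A + 3 * Real.pi * (n + 1)) ≤ b (n + 1) := by
        have h2 : α * (3 * Real.pi / (A + 3 * Real.pi * (n + 1)))
            = c * g / (A + 3 * Real.pi * (n + 1)) := by
          rw [hα]; field_simp
        have h3 := hkey (n + 1) (by omega)
        have h4 : α * (Real.log (A + 3 * Real.pi * (n + 2))
            - Real.log (A + 3 * Real.pi * (n + 1)))
            ≤ α * (3 * Real.pi / (A + 3 * Real.pi * (n + 1))) :=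
          mul_le_mul_of_nonneg_left hlog hαpos.le
        push_cast at h3 ⊢
        push_cast at h2 h4
        nlinarith [h2, h3, h4]
      have hcast : ((n:ℝ) + 1 + 1) = ((n:ℝ) + 2) := by ring
      push_cast
      push_cast at ih
      rw [show ((n:ℝ) + 1 + 1) = ((n:ℝ) + 2) by ring]
      linarith [hstep]
  -- comparison with a p-series
  have hcomp : ∀ n : ℕ, Real.exp (-(∑ j ∈ Finset.Icc 1 n, b j))
      ≤ Real.exp (α * Real.log (A + 3 * Real.pi)) * ((n:ℝ) + 1) ^ (-α) := by
    intro n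
    have hx : 0 < A + 3 * Real.pi * (n + 1) := by positivity
    have h1 : Real.exp (-(∑ j ∈ Finset.Icc 1 n, b j))
        ≤ Real.exp (α * Real.log (A + 3 * Real.pi)
          - α * Real.log (A + 3 * Real.pi * (n + 1))) := by
      apply Real.exp_le_exp.mpr
      linarith [hsum n]
    rw [Real.exp_sub] at h1
    have h2 : Real.exp (α * Real.log (A + 3 * Real.pi * (n + 1)))
        = (A + 3 * Real.pi * (n + 1)) ^ α := by
      rw [Real.rpow_def_of_pos hx]; ring_nf
    have h3 : (A + 3 * Real.pi * (n + 1)) ^ (-α) ≤ ((n:ℝ) + 1) ^ (-α) := by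
      apply Real.rpow_le_rpow_of_nonpos (by positivity) _ (by linarith)
      have hp1 : (1:ℝ) < 3 * Real.pi := by
        have := Real.pi_gt_three; linarith
      nlinarith [Nat.cast_nonneg (α := ℝ) n]
    calc Real.exp (-(∑ j ∈ Finset.Icc 1 n, b j))
        ≤ Real.exp (α * Real.log (A + 3 * Real.pi))
          / Real.exp (α * Real.log (A + 3 * Real.pi * (n + 1))) := h1
      _ = Real.exp (α * Real.log (A + 3 * Real.pi))
          * (A + 3 * Real.pi * (n + 1)) ^ (-α) := by
          rw [h2, Real.rpow_neg hx.le, div_eq_mul_inv]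
      _ ≤ _ := by
          apply mul_le_mul_of_nonneg_left h3 (Real.exp_pos _).le
  have hS : Summable (fun n : ℕ => ((n:ℝ) + 1) ^ (-α)) := by
    have h0 : Summable (fun n : ℕ => (n:ℝ) ^ (-α)) :=
      Real.summable_nat_rpow.mpr (by linarith)
    have := (summable_nat_add_iff (f := fun n : ℕ => (n:ℝ) ^ (-α)) 1).mpr h0
    simpa using this
  refine Summable.of_nonneg_of_le (fun n => (Real.exp_pos _).le) hcomp (hS.mul_left _)
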